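/- Let g be a Lorentzian metric on a neighborhood of (0,0) in ℝ² and R > 0 satisfy ∇_α∇_β R = (m̂/R²)g_{αβ} with m̂ = (1/2)R(0,0) > 0 and ∇R(0,0) = 0, where m(x,t) := (1/2)R(1−g(∇R,∇R)) is constant equal to m̂. Suppose additionally that along the slice t = 0 every point x with ∂_x R(x,0) = 0 satisfies R(x,0) ≤ 2m̂, that the slice {t=0} is compact (a circle), and g_{xx} > 0 on it. Then a contradiction follows; i.e., no such configuration exists. -/

import Mathlib

/- The full contradiction in Rendall's theorem, on the compact slice `t = 0`
(a circle, modeled by an `L`-periodic function `R` on `ℝ`): `R(0) = 2m̂`, every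
critical point satisfies `R ≤ 2m̂`, so `0` is a global maximum; but the Hessian
equation gives `R''(0) = (m̂/R(0)²) g_{xx} > 0` at the critical point `0`,
contradicting the second derivative test.  Hence no such configuration exists. -/
theorem stmt_15 (R : ℝ → ℝ) (mhat L gxx : ℝ)
    (hR2 : ContDiff ℝ 2 R) (hper : Function.Periodic R L) (hL : 0 < L)
    (hm : 0 < mhat) (hRpos : ∀ x, 0 < R x)
    (hR0 : R 0 = 2 * mhat)
    (hcrit0 : deriv R 0 = 0)
    (hbound : ∀ x, deriv R x = 0 → R x ≤ 2 * mhat)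
    (hsecond : deriv (deriv R) 0 = (mhat / (R 0)^2) * gxx)
    (hgxx : 0 < gxx) : False := by
  have hR0pos := hRpos 0
  have hc : 0 < deriv (deriv R) 0 := by
    rw [hsecond]; positivity
  have hdiff : Differentiable ℝ R := hR2.differentiable (by norm_num)
  have hd1 : ContDiff ℝ 1 (deriv R) := by
    have h := (contDiff_succ_iff_deriv (n := 1)).mp (by exact_mod_cast hR2)
    exact h.2.2
  have hdd : DifferentiableAt ℝ (deriv R) 0 := (hd1.differentiable (by norm_num)) 0
  have hslope : Filter.Tendsto (slope (deriv R) 0) (nhdsWithin 0 {(0:ℝ)}ᶜ)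
      (nhds (deriv (deriv R) 0)) := hasDerivAt_iff_tendsto_slope.mp hdd.hasDerivAt
  have hev : ∀ᶠ x in nhdsWithin 0 (Set.Ioi (0:ℝ)), 0 < slope (deriv R) 0 x := by
    have h1 : ∀ᶠ x in nhdsWithin 0 {(0:ℝ)}ᶜ, 0 < slope (deriv R) 0 x :=
      hslope.eventually (eventually_gt_nhds hc)
    exact h1.filter_mono (nhdsWithin_mono 0 (fun x hx => ne_of_gt hx))
  obtain ⟨ε, hε, hsub⟩ := mem_nhdsGT_iff_exists_Ioc_subset.mp hev
  have hεpos : (0:ℝ) < ε := hε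
  have hderivpos : ∀ x ∈ Set.Ioc (0:ℝ) ε, 0 < deriv R x := by
    intro x hx
    have hs := hsub hx
    have heq : slope (deriv R) 0 x = x⁻¹ * deriv R x := by
      simp [slope, hcrit0]
    have hs' : 0 < x⁻¹ * deriv R x := heq ▸ hs
    have hxpos : 0 < x := hx.1
    have h2 := mul_pos hxpos hs'
    rwa [← mul_assoc, mul_inv_cancel₀ (ne_of_gt hxpos), one_mul] at h2
  have hmono : StrictMonoOn R (Set.Icc 0 ε) := by
    apply strictMonoOn_of_deriv_pos (convex_Icc 0 ε) hdiff.continuous.continuousOn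
    intro x hx
    rw [interior_Icc] at hx
    exact hderivpos x ⟨hx.1, hx.2.le⟩
  have hlt : R 0 < R ε :=
    hmono ⟨le_rfl, hεpos.le⟩ ⟨hεpos.le, le_rfl⟩ hεpos
  -- global max on [0, L], extended by periodicity
  obtain ⟨x0, hx0mem, hx0⟩ := isCompact_Icc.exists_isMaxOn
    (Set.nonempty_Icc.mpr hL.le) (hdiff.continuous.continuousOn (s := Set.Icc 0 L))
  have hglobal : ∀ y, R y ≤ R x0 := by
    intro y
    obtain ⟨z, hz, hzy⟩ := hper.exists_mem_Ico₀ hL y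
    rw [hzy]
    exact hx0 ⟨hz.1, hz.2.le⟩
  have hloc : IsLocalMax R x0 := Filter.Eventually.of_forall hglobal
  have hderiv0 : deriv R x0 = 0 := hloc.deriv_eq_zero
  have := hbound x0 hderiv0
  have := hglobal ε
  linarith
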